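/- Let K₀ and K₁ denote the subspaces of L_{2,|r|}(-1,1) consisting of functions vanishing a.e. outside (-1/2,1/2), respectively vanishing a.e. on (-1/2,1/2), and let P₀, P₁ be the orthogonal projections onto K₀, K₁. Let W₀ be a bounded linear operator on L_{2,|r|}(-1,1) such that J₀W₀ - I is nonnegative on the Hilbert space L_{2,|r|}(-1,1), (W₀f)(x) = (J₀f)(x) for almost every x with 1/2 ≤ |x| ≤ 1 for all f, and W₀ maps F_max into F_max. Let W₋₁ be a bounded linear operator on L_{2,|r|}(-1,1) such that J₀W₋₁ - I is nonnegative, (W₋₁f)(x) = (J₀f)(x) for almost every x with -1/2 ≤ x ≤ 1 for all f, for every f ∈ F_max the restrictions of W₋₁f to [-1,0] and [0,1] lie in F_max([-1,0]) and F_max([0,1]) respectively, and (W₋₁f)(-1) = f(-1) for all f ∈ F_max. Then: K₀ and K₁ are invariant under both W₀ and W₋₁; and the operator W₀₁ := W₀P₀ + W₋₁P₁ is bounded and boundedly invertible on L_{2,|r|}(-1,1), with J₀W₀₁ - I nonnegative (so W₀₁ is positive in the Krein space: [W₀₁f, f] > 0 for all f ≠ 0), W₀₁ maps F_max into F_max,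 and (W₀₁f)(-1) = f(-1) and (W₀₁f)(1) = f(1) for all f ∈ F_max. -/

import Mathlib

open MeasureTheory Set Filter

noncomputable section

namespace SL

/-- The measure `|r(x)| dx` on the set `I ⊆ ℝ`; `L_{2,|r|}(I) = Lp ℂ 2 (wM r I)`. -/
def wM (r : ℝ → ℝ) (I : Set ℝ) : Measure ℝ :=
  (volume.restrict I).withDensity fun x => ENNReal.ofReal |r x|

/-- `g` is absolutely continuous on `[a,b]` with (a.e.) derivative `g'`,
encoded via the fundamental theorem of calculus. -/
def ACOn (g g' : ℝ → ℂ) (a b : ℝ) : Prop :=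
  IntervalIntegrable g' volume a b ∧
    ∀ x ∈ Set.Icc a b, g x = g a + ∫ t in a..x, g' t

/-- The function `g` belongs to `F_max([a,b])`: it is square integrable with respect to
`|r| dx` on `[a,b]` and has a representative `g₀`, absolutely continuous on `[a,b]`,
with `∫_a^b p |g₀'|² < ∞`. -/
def InFmax (p r : ℝ → ℝ) (a b : ℝ) (g : ℝ → ℂ) : Prop :=
  MemLp g 2 (wM r (Set.Icc a b)) ∧
    ∃ g₀ g' : ℝ → ℂ, (g =ᵐ[wM r (Set.Icc a b)] g₀) ∧ ACOn g₀ g' a b ∧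
      IntegrableOn (fun x => p x * ‖g' x‖ ^ 2) (Set.Icc a b)

/-- Standing assumptions on the coefficients of the Sturm–Liouville equation. -/
def Coeffs (p q r : ℝ → ℝ) : Prop :=
  IntegrableOn (fun x => 1 / p x) (Set.Icc (-1 : ℝ) 1) ∧
  IntegrableOn q (Set.Icc (-1 : ℝ) 1) ∧
  IntegrableOn r (Set.Icc (-1 : ℝ) 1) ∧
  ∀ᵐ x ∂(volume.restrict (Set.Icc (-1 : ℝ) 1)), 0 < p x ∧ 0 < x * r x

/-- `h` is a half-neighborhood of `a` (contained in `[-1,1]`): a closed interval of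
nonzero length with `a` as an endpoint. -/
def IsHalfNbhd (h : Set ℝ) (a : ℝ) : Prop :=
  (∃ c, -1 ≤ c ∧ c < a ∧ a ≤ 1 ∧ h = Set.Icc c a) ∨
  (∃ d, -1 ≤ a ∧ a < d ∧ d ≤ 1 ∧ h = Set.Icc a d)

/-- The ordered pair of half-neighborhoods `(ha, hb)` of `a` resp. `b` is smoothly
connected with parameters `α', β', ρ0 = ρ(0)`; the affine functions are
`α t = a + α' t` and `β t = b + β' t`. -/
def SmoothlyConnectedOn (p r : ℝ → ℝ) (ha hb : Set ℝ) (a b α' β' ρ0 : ℝ) : Prop :=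
  α' ≠ 0 ∧ β' ≠ 0 ∧
  ∃ (ε τ : ℝ) (ρ ϖ : ℝ → ℝ),
    0 < ε ∧ 0 < τ ∧
    (∀ t ∈ Set.Icc (0 : ℝ) ε, a + α' * t ∈ ha) ∧
    (∀ t ∈ Set.Icc (0 : ℝ) ε, b + β' * t ∈ hb) ∧
    (∀ t ∈ Set.Icc (0 : ℝ) ε, 0 ≤ ρ t) ∧
    (∀ t ∈ Set.Icc (0 : ℝ) ε, 0 ≤ ϖ t) ∧
    ρ 0 = ρ0 ∧
    (∀ c ∈ Set.Ioc (0 : ℝ) ε, IntegrableOn (fun t => p (a + α' * t)) (Set.Icc c ε)) ∧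
    (∀ c ∈ Set.Ioc (0 : ℝ) ε, IntegrableOn (fun t => p (b + β' * t)) (Set.Icc c ε)) ∧
    InFmax p r (min a (a + α' * ε)) (max a (a + α' * ε))
      (fun x => ((ρ ((x - a) / α') : ℝ) : ℂ)) ∧
    (∀ᵐ t ∂(volume.restrict (Set.Icc (0 : ℝ) ε)), 1 / τ < ϖ t ∧ ϖ t < τ) ∧
    (∀ t ∈ Set.Ioc (0 : ℝ) ε, ρ t = |r (b + β' * t)| / |r (a + α' * t)|) ∧
    (∀ t ∈ Set.Ioc (0 : ℝ) ε, ϖ t = p (b + β' * t) / p (a + α' * t))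

/-- Condition at `0`: some ordered pair of half-neighborhoods of `0` is smoothly
connected with parameters satisfying `|α₀'| ≠ |β₀'|·ρ₀(0)`. -/
def CondAt0 (p r : ℝ → ℝ) : Prop :=
  ∃ (ha hb : Set ℝ) (α' β' ρ0 : ℝ), IsHalfNbhd ha 0 ∧ IsHalfNbhd hb 0 ∧
    SmoothlyConnectedOn p r ha hb 0 0 α' β' ρ0 ∧ |α'| ≠ |β'| * ρ0

/-- Condition at `-1`. -/
def CondAtNeg1 (p r : ℝ → ℝ) : Prop :=
  ∃ (ha hb : Set ℝ) (α' β' ρ0 : ℝ), IsHalfNbhd ha (-1) ∧ IsHalfNbhd hb (-1) ∧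
    SmoothlyConnectedOn p r ha hb (-1) (-1) α' β' ρ0 ∧ |α'| ≠ |β'| * ρ0

/-- Condition at `1`. -/
def CondAt1 (p r : ℝ → ℝ) : Prop :=
  ∃ (ha hb : Set ℝ) (α' β' ρ0 : ℝ), IsHalfNbhd ha 1 ∧ IsHalfNbhd hb 1 ∧
    SmoothlyConnectedOn p r ha hb 1 1 α' β' ρ0 ∧ |α'| ≠ |β'| * ρ0

/-- The Krein inner product `[f,g] = ∫_{-1}^1 f conj(g) r dx` on `L_{2,r}(-1,1)`. -/
def krein0 (r : ℝ → ℝ) (f g : ℝ → ℂ) : ℂ :=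
  ∫ x in Set.Icc (-1 : ℝ) 1, f x * (starRingEnd ℂ) (g x) * (r x : ℂ)

end SL
namespace SL

/-- The Hilbert space `L_{2,|r|}(-1,1)`. -/
abbrev Pa (r : ℝ → ℝ) := Lp ℂ 2 (wM r (Set.Icc (-1 : ℝ) 1))

end SL
namespace SL

/-- Membership in `K₀`: the subspace of `L_{2,|r|}(-1,1)` of functions vanishing a.e.
outside `(-1/2, 1/2)`. -/
def InK0 (r : ℝ → ℝ) (f : Pa r) : Prop :=
  ∀ᵐ x ∂(wM r (Set.Icc (-1 : ℝ) 1)),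
    x ∉ Set.Ioo (-(1 / 2) : ℝ) (1 / 2) → (f : ℝ → ℂ) x = 0

/-- Membership in `K₁`: the subspace of `L_{2,|r|}(-1,1)` of functions vanishing a.e.
on `(-1/2, 1/2)`. -/
def InK1 (r : ℝ → ℝ) (f : Pa r) : Prop :=
  ∀ᵐ x ∂(wM r (Set.Icc (-1 : ℝ) 1)),
    x ∈ Set.Ioo (-(1 / 2) : ℝ) (1 / 2) → (f : ℝ → ℂ) x = 0



section Helpers

variable {r : ℝ → ℝ}

private lemma measurable_rsign : Measurable Real.sign := by
  unfold Real.sign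
  refine Measurable.ite (measurableSet_lt measurable_id measurable_const) measurable_const ?_
  exact Measurable.ite (measurableSet_lt measurable_const measurable_id) measurable_const
    measurable_const

private lemma sgn_mul_abs (t : ℝ) : Real.sign t * |t| = t := by
  rcases lt_trichotomy t 0 with h | h | h
  · rw [Real.sign_of_neg h, abs_of_neg h]; ring
  · simp [h]
  · rw [Real.sign_of_pos h, abs_of_pos h]; ring

private lemma abs_sgn_le (t : ℝ) : ‖Real.sign t‖ ≤ 1 := by
  rcases Real.sign_apply_eq t with h | h | h <;> simp [h]

private lemma sq_sgn {t : ℝ} (ht : t ≠ 0) :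
    ((Real.sign t : ℝ) : ℂ) * ((Real.sign t : ℝ) : ℂ) = 1 := by
  rcases Real.sign_apply_eq_of_ne_zero t ht with h | h <;> simp [h]

private lemma ae_wM_of_ae {s : Set ℝ} {P : ℝ → Prop}
    (h : ∀ᵐ x ∂(volume.restrict s), P x) : ∀ᵐ x ∂(wM r s), P x :=
  h.filter_mono (withDensity_absolutelyContinuous _ _).ae_le

private lemma ae_of_ae_wM {s : Set ℝ} (hr : AEStronglyMeasurable r (volume.restrict s))
    {P : ℝ → Prop} (h : ∀ᵐ x ∂(wM r s), P x) :
    ∀ᵐ x ∂(volume.restrict s), r x ≠ 0 → P x := by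
  set μ := volume.restrict s with hμ
  have hAEM : AEMeasurable (fun x => ENNReal.ofReal |r x|) μ :=
    (continuous_abs.measurable.comp_aemeasurable hr.aemeasurable).ennreal_ofReal
  have hwM : wM r s = μ.withDensity (hAEM.mk _) := by
    rw [wM, ← hμ]; exact withDensity_congr_ae hAEM.ae_eq_mk
  set N := toMeasurable (wM r s) {x | ¬ P x} with hN
  have hNm : MeasurableSet N := measurableSet_toMeasurable _ _
  have hN0 : wM r s N = 0 := by rw [hN, measure_toMeasurable]; exact h
  rw [hwM, withDensity_apply _ hNm] at hN0
  have h2 := (setLIntegral_eq_zero_iff hNm hAEM.measurable_mk).mp hN0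
  filter_upwards [h2, hAEM.ae_eq_mk] with x hx hdx hrx
  by_contra hPx
  have hxN : x ∈ N := subset_toMeasurable _ _ hPx
  have h0 : ENNReal.ofReal |r x| = 0 := by rw [hdx]; exact hx hxN
  rw [ENNReal.ofReal_eq_zero] at h0
  exact hrx (abs_eq_zero.mp (le_antisymm h0 (abs_nonneg _)))

private lemma wM_restrict {s t : Set ℝ} (ht : MeasurableSet t) :
    (wM r s).restrict t = wM r (t ∩ s) := by
  rw [wM, restrict_withDensity ht, Measure.restrict_restrict ht, wM]

private lemma integral_wM {s : Set ℝ} (hr : AEStronglyMeasurable r (volume.restrict s))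
    (g : ℝ → ℂ) : ∫ x, g x ∂(wM r s) = ∫ x in s, |r x| • g x ∂volume := by
  have hm : AEMeasurable (fun x => (|r x|).toNNReal) (volume.restrict s) :=
    (continuous_real_toNNReal.measurable.comp_aemeasurable (continuous_abs.measurable.comp_aemeasurable hr.aemeasurable))
  rw [wM,
    show (fun x => ENNReal.ofReal |r x|) = (fun x => (((|r x|).toNNReal : NNReal) : ENNReal)) from rfl,
    integral_withDensity_eq_integral_smul₀ hm g]
  refine integral_congr_ae (Filter.Eventually.of_forall fun x => ?_)
  show (|r x|).toNNReal • g x = |r x| • g x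
  rw [NNReal.smul_def, Real.coe_toNNReal _ (abs_nonneg _)]

private lemma krein0_eq_wM (hr : AEStronglyMeasurable r (volume.restrict (Set.Icc (-1 : ℝ) 1)))
    (u v : ℝ → ℂ) :
    krein0 r u v = ∫ x, ((Real.sign (r x) : ℝ) : ℂ) * u x * (starRingEnd ℂ) (v x)
      ∂(wM r (Set.Icc (-1 : ℝ) 1)) := by
  rw [integral_wM hr, krein0]
  refine integral_congr_ae (Filter.Eventually.of_forall fun x => ?_)
  have : ((|r x| : ℝ) : ℂ) * ((Real.sign (r x) : ℝ) : ℂ) = (r x : ℂ) := by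
    rw [← Complex.ofReal_mul]
    norm_cast
    rw [mul_comm, sgn_mul_abs]
  calc u x * (starRingEnd ℂ) (v x) * (r x : ℂ)
      = ((|r x| : ℝ) : ℂ) * ((Real.sign (r x) : ℝ) : ℂ) * (u x * (starRingEnd ℂ) (v x)) := by
        rw [this]; ring
    _ = |r x| • (((Real.sign (r x) : ℝ) : ℂ) * u x * (starRingEnd ℂ) (v x)) := by
        rw [Complex.real_smul]; ring

private lemma integrable_mul_L2 (f g : Pa r) :
    Integrable (fun x => (f : ℝ → ℂ) x * (starRingEnd ℂ) ((g : ℝ → ℂ) x))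
      (wM r (Set.Icc (-1 : ℝ) 1)) := by
  have h := L2.integrable_inner (𝕜 := ℂ) g f
  refine h.congr (Filter.Eventually.of_forall fun x => ?_)
  simp [RCLike.inner_apply, mul_comm]

private lemma sgn_aesm {s : Set ℝ} (hr : AEStronglyMeasurable r (volume.restrict s)) :
    AEStronglyMeasurable (fun x => ((Real.sign (r x) : ℝ) : ℂ)) (wM r s) := by
  have h1 : AEMeasurable r (wM r s) :=
    hr.aemeasurable.mono_ac (withDensity_absolutelyContinuous _ _)
  exact (Complex.measurable_ofReal.comp_aemeasurable
    (measurable_rsign.comp_aemeasurable h1)).aestronglyMeasurable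

private lemma integrable_sgn_mul {s : Set ℝ} (hr : AEStronglyMeasurable r (volume.restrict s))
    {h : ℝ → ℂ} (hh : Integrable h (wM r s)) :
    Integrable (fun x => ((Real.sign (r x) : ℝ) : ℂ) * h x) (wM r s) :=
  hh.bdd_mul (c := 1) (sgn_aesm hr) (Filter.Eventually.of_forall fun x => by simpa using abs_sgn_le (r x))

private lemma integrable_core (hr : AEStronglyMeasurable r (volume.restrict (Set.Icc (-1 : ℝ) 1)))
    (u v : Pa r) :
    Integrable (fun x => ((Real.sign (r x) : ℝ) : ℂ) * (u : ℝ → ℂ) x *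
      (starRingEnd ℂ) ((v : ℝ → ℂ) x)) (wM r (Set.Icc (-1 : ℝ) 1)) :=
  (integrable_sgn_mul hr (integrable_mul_L2 u v)).congr
    (Filter.Eventually.of_forall fun x => by ring)

private lemma sesq_symm {E : Type*} [AddCommGroup E] [Module ℂ E] (B : E → E → ℂ)
    (addl : ∀ f g h, B (f + g) h = B f h + B g h)
    (addr : ∀ f g h, B f (g + h) = B f g + B f h)
    (smull : ∀ f g, B ((Complex.I : ℂ) • f) g = Complex.I * B f g)
    (smulr : ∀ f g, B f ((Complex.I : ℂ) • g) = -Complex.I * B f g)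
    (hreal : ∀ f, (B f f).im = 0) :
    ∀ f g, B f g = (starRingEnd ℂ) (B g f) := by
  intro f g
  have h1 := hreal (f + g)
  simp only [addl, addr] at h1
  have h2 := hreal (f + Complex.I • g)
  simp only [addl, addr, smull, smulr] at h2
  have hff := hreal f
  have hgg := hreal g
  apply Complex.ext
  · simp only [Complex.add_im, Complex.mul_im, Complex.mul_re, Complex.neg_re, Complex.neg_im,
      Complex.I_re, Complex.I_im, Complex.conj_re, hff, hgg] at h1 h2 ⊢
    linarith
  · simp only [Complex.add_im, Complex.mul_im, Complex.mul_re, Complex.neg_re, Complex.neg_im,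
      Complex.I_re, Complex.I_im, Complex.conj_im, hff, hgg] at h1 h2 ⊢
    linarith

end Helpers



section Helpers2

variable {r : ℝ → ℝ}

private lemma ACOn_continuousOn {g g' : ℝ → ℂ} {a b : ℝ} (h : ACOn g g' a b) (hab : a ≤ b) :
    ContinuousOn g (Set.Icc a b) := by
  have h2 := intervalIntegral.continuousOn_primitive_interval' h.1 Set.left_mem_uIcc
  rw [Set.uIcc_of_le hab] at h2
  exact (continuousOn_const.add h2).congr fun x hx => h.2 x hx

private lemma localize (p q : ℝ → ℝ) (hc : Coeffs p q r) (W : Pa r →L[ℂ] Pa r) (S : Set ℝ)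
    (hWnn : ∀ f : Pa r, (krein0 r ⇑(W f) ⇑f).im = 0)
    (hWc : ∀ f : Pa r, ∀ᵐ x ∂(wM r (Set.Icc (-1 : ℝ) 1)), x ∉ S →
      (W f : ℝ → ℂ) x = ((Real.sign (r x) : ℝ) : ℂ) * (f : ℝ → ℂ) x)
    (g : Pa r) (hg : ∀ᵐ x ∂(wM r (Set.Icc (-1 : ℝ) 1)), x ∈ S → (g : ℝ → ℂ) x = 0) :
    ∀ᵐ x ∂(wM r (Set.Icc (-1 : ℝ) 1)),
      (W g : ℝ → ℂ) x = ((Real.sign (r x) : ℝ) : ℂ) * (g : ℝ → ℂ) x := by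
  have hrm : AEStronglyMeasurable r (volume.restrict (Set.Icc (-1 : ℝ) 1)) := hc.2.2.1.1
  set μ := wM r (Set.Icc (-1 : ℝ) 1) with hμdef
  have hrne : ∀ᵐ x ∂μ, r x ≠ 0 := by
    refine ae_wM_of_ae (hc.2.2.2.mono fun x hx h0 => ?_)
    rw [h0, mul_zero] at hx; exact lt_irrefl 0 hx.2
  set B : Pa r → Pa r → ℂ := fun f k =>
    ∫ x, (((Real.sign (r x) : ℝ) : ℂ) * (W f : ℝ → ℂ) x - (f : ℝ → ℂ) x) *
      (starRingEnd ℂ) ((k : ℝ → ℂ) x) ∂μ with hBdef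
  have hint : ∀ f k : Pa r, Integrable (fun x =>
      (((Real.sign (r x) : ℝ) : ℂ) * (W f : ℝ → ℂ) x - (f : ℝ → ℂ) x) *
      (starRingEnd ℂ) ((k : ℝ → ℂ) x)) μ := fun f k =>
    ((integrable_core hrm (W f) k).sub (integrable_mul_L2 f k)).congr
      (Filter.Eventually.of_forall fun x => by simp only [Pi.sub_apply]; ring)
  have addl : ∀ f f' k : Pa r, B (f + f') k = B f k + B f' k := by
    intro f f' k
    simp only [hBdef]
    rw [← integral_add (hint f k) (hint f' k)]
    have e1 : ⇑(W (f + f')) =ᵐ[μ] ⇑(W f) + ⇑(W f') := by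
      rw [map_add]; exact Lp.coeFn_add _ _
    have e2 : ⇑(f + f') =ᵐ[μ] ⇑f + ⇑f' := Lp.coeFn_add _ _
    refine integral_congr_ae ?_
    filter_upwards [e1, e2] with x h1 h2
    simp only [Pi.add_apply] at h1 h2
    rw [h1, h2]; ring
  have addr : ∀ f k k' : Pa r, B f (k + k') = B f k + B f k' := by
    intro f k k'
    simp only [hBdef]
    rw [← integral_add (hint f k) (hint f k')]
    have e2 : ⇑(k + k') =ᵐ[μ] ⇑k + ⇑k' := Lp.coeFn_add _ _
    refine integral_congr_ae ?_
    filter_upwards [e2] with x h2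
    simp only [Pi.add_apply] at h2
    rw [h2, map_add]; ring
  have smull : ∀ f k : Pa r, B ((Complex.I : ℂ) • f) k = Complex.I * B f k := by
    intro f k
    simp only [hBdef]
    rw [← integral_const_mul]
    have e1 : ⇑(W ((Complex.I : ℂ) • f)) =ᵐ[μ] fun x => Complex.I * (W f : ℝ → ℂ) x := by
      rw [_root_.map_smul]
      filter_upwards [Lp.coeFn_smul (Complex.I) (W f)] with x hx
      rw [hx]; simp [smul_eq_mul]
    have e2 : ⇑((Complex.I : ℂ) • f) =ᵐ[μ] fun x => Complex.I * (f : ℝ → ℂ) x := by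
      filter_upwards [Lp.coeFn_smul (Complex.I) f] with x hx
      rw [hx]; simp [smul_eq_mul]
    refine integral_congr_ae ?_
    filter_upwards [e1, e2] with x h1 h2
    rw [h1, h2]; ring
  have smulr : ∀ f k : Pa r, B f ((Complex.I : ℂ) • k) = -Complex.I * B f k := by
    intro f k
    simp only [hBdef]
    rw [← integral_const_mul]
    have e2 : ⇑((Complex.I : ℂ) • k) =ᵐ[μ] fun x => Complex.I * (k : ℝ → ℂ) x := by
      filter_upwards [Lp.coeFn_smul (Complex.I) k] with x hx
      rw [hx]; simp [smul_eq_mul]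
    refine integral_congr_ae ?_
    filter_upwards [e2] with x h2
    rw [h2, map_mul]
    simp only [Complex.conj_I]
    ring
  have hBreal : ∀ f : Pa r, (B f f).im = 0 := by
    intro f
    have hsplit : B f f = (∫ x, ((Real.sign (r x) : ℝ) : ℂ) * (W f : ℝ → ℂ) x *
        (starRingEnd ℂ) ((f : ℝ → ℂ) x) ∂μ) -
        ∫ x, (f : ℝ → ℂ) x * (starRingEnd ℂ) ((f : ℝ → ℂ) x) ∂μ := by
      simp only [hBdef]
      rw [← integral_sub (integrable_core hrm (W f) f) (integrable_mul_L2 f f)]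
      exact integral_congr_ae (Filter.Eventually.of_forall fun x => by ring)
    have h2 : (∫ x, (f : ℝ → ℂ) x * (starRingEnd ℂ) ((f : ℝ → ℂ) x) ∂μ)
        = ((∫ x, ‖(f : ℝ → ℂ) x‖ ^ 2 ∂μ : ℝ) : ℂ) := by
      have e : (fun x => (f : ℝ → ℂ) x * (starRingEnd ℂ) ((f : ℝ → ℂ) x))
          =ᵐ[μ] (fun x => ((‖(f : ℝ → ℂ) x‖ ^ 2 : ℝ) : ℂ)) :=
        Filter.Eventually.of_forall fun x => by
          simp [Complex.mul_conj, Complex.normSq_eq_norm_sq]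
      rw [integral_congr_ae e]
      exact integral_ofReal
    rw [hsplit, ← krein0_eq_wM hrm, Complex.sub_im, hWnn f, h2, Complex.ofReal_im, sub_zero]
  have hsymm := sesq_symm B addl addr smull smulr hBreal
  have step1 : ∀ k : Pa r, B k g = 0 := by
    intro k
    simp only [hBdef]
    have hz : (fun x => (((Real.sign (r x) : ℝ) : ℂ) * (W k : ℝ → ℂ) x - (k : ℝ → ℂ) x) *
        (starRingEnd ℂ) ((g : ℝ → ℂ) x)) =ᵐ[μ] 0 := by
      filter_upwards [hrne, hWc k, hg] with x hx h1 h2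
      by_cases hs : x ∈ S
      · simp [h2 hs]
      · rw [h1 hs, Pi.zero_apply]
        calc (((Real.sign (r x) : ℝ) : ℂ) * (((Real.sign (r x) : ℝ) : ℂ) * (k : ℝ → ℂ) x)
              - (k : ℝ → ℂ) x) * (starRingEnd ℂ) ((g : ℝ → ℂ) x)
            = ((((Real.sign (r x) : ℝ) : ℂ) * ((Real.sign (r x) : ℝ) : ℂ)) * (k : ℝ → ℂ) x
              - (k : ℝ → ℂ) x) * (starRingEnd ℂ) ((g : ℝ → ℂ) x) := by ring
          _ = 0 := by rw [sq_sgn hx]; ring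
    rw [integral_congr_ae hz]
    simp
  have step2 : ∀ k : Pa r, B g k = 0 := fun k => by
    rw [hsymm g k, step1 k, map_zero]
  set v : ℝ → ℂ := fun x => ((Real.sign (r x) : ℝ) : ℂ) * (W g : ℝ → ℂ) x - (g : ℝ → ℂ) x
    with hvdef
  have hvmem : MemLp v 2 μ := by
    refine MemLp.sub ?_ (Lp.memLp g)
    refine MemLp.of_le (Lp.memLp (W g)) ((sgn_aesm hrm).mul (Lp.aestronglyMeasurable (W g))) ?_
    refine Filter.Eventually.of_forall fun x => ?_
    rw [norm_mul]
    calc ‖((Real.sign (r x) : ℝ) : ℂ)‖ * ‖(W g : ℝ → ℂ) x‖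
        ≤ 1 * ‖(W g : ℝ → ℂ) x‖ := by gcongr; simpa using abs_sgn_le (r x)
      _ = _ := one_mul _
  set k : Pa r := hvmem.toLp v with hkdef
  have hkc : ⇑k =ᵐ[μ] v := hvmem.coeFn_toLp
  have h0 : ((∫ x, ‖v x‖ ^ 2 ∂μ : ℝ) : ℂ) = 0 := by
    rw [← step2 k]
    simp only [hBdef]
    have e : (fun x => (((Real.sign (r x) : ℝ) : ℂ) * (W g : ℝ → ℂ) x - (g : ℝ → ℂ) x) *
        (starRingEnd ℂ) ((k : ℝ → ℂ) x)) =ᵐ[μ] (fun x => ((‖v x‖ ^ 2 : ℝ) : ℂ)) := by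
      filter_upwards [hkc] with x hx
      rw [hx]
      show v x * (starRingEnd ℂ) (v x) = _
      simp [Complex.mul_conj, Complex.normSq_eq_norm_sq]
    rw [integral_congr_ae e]
    exact integral_ofReal.symm
  have hInt2 : Integrable (fun x => ‖v x‖ ^ 2) μ := by
    have h := hvmem.integrable_norm_rpow (by norm_num) (by norm_num)
    refine h.congr (Filter.Eventually.of_forall fun x => ?_)
    show ‖v x‖ ^ (2 : ENNReal).toReal = ‖v x‖ ^ 2
    rw [ENNReal.toReal_ofNat, Real.rpow_two]
  have hnz : ∀ᵐ x ∂μ, v x = 0 := by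
    have hz := (integral_eq_zero_iff_of_nonneg (fun x => by positivity) hInt2).mp
      (by exact_mod_cast h0)
    filter_upwards [hz] with x hx
    have : ‖v x‖ ^ 2 = 0 := hx
    have : ‖v x‖ = 0 := by nlinarith [norm_nonneg (v x)]
    simpa using this
  filter_upwards [hnz, hrne] with x hx hrx
  have h1 : ((Real.sign (r x) : ℝ) : ℂ) * (W g : ℝ → ℂ) x = (g : ℝ → ℂ) x := by
    have := hx
    simp only [hvdef, sub_eq_zero] at this
    exact this
  calc (W g : ℝ → ℂ) x
      = (((Real.sign (r x) : ℝ) : ℂ) * ((Real.sign (r x) : ℝ) : ℂ)) * (W g : ℝ → ℂ) x := by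
        rw [sq_sgn hrx, one_mul]
    _ = ((Real.sign (r x) : ℝ) : ℂ) * (((Real.sign (r x) : ℝ) : ℂ) * (W g : ℝ → ℂ) x) := by ring
    _ = ((Real.sign (r x) : ℝ) : ℂ) * (g : ℝ → ℂ) x := by rw [h1]

end Helpers2



section Helpers3

variable {r : ℝ → ℝ}

private lemma half_le_abs {x : ℝ} (hx : x ∉ Set.Ioo (-(1 / 2) : ℝ) (1 / 2)) :
    1 / 2 ≤ |x| := by
  rw [Set.mem_Ioo, not_and_or, not_lt, not_lt] at hx
  rcases hx with h | h
  · rw [le_abs]; right; linarith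
  · rw [le_abs]; left; linarith

private lemma integral_add4 {α : Type*} [MeasurableSpace α] {μ : Measure α} {A B C D : α → ℂ}
    (hA : Integrable A μ) (hB : Integrable B μ) (hC : Integrable C μ) (hD : Integrable D μ) :
    ∫ x, (A x + B x) + (C x + D x) ∂μ =
      ((∫ x, A x ∂μ) + ∫ x, B x ∂μ) + ((∫ x, C x ∂μ) + ∫ x, D x ∂μ) := by
  have e1 : ∫ x, (A x + B x) + (C x + D x) ∂μ
      = (∫ x, A x + B x ∂μ) + ∫ x, C x + D x ∂μ := integral_add (hA.add hB) (hC.add hD)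
  rw [e1, integral_add hA hB, integral_add hC hD]

end Helpers3

set_option maxHeartbeats 1000000 in
/-- **Construction of `W₀₁` (from the proof of Theorem 5.2).** Let `P₀, P₁` be the
orthogonal projections of `L_{2,|r|}(-1,1)` onto `K₀, K₁` (i.e. multiplication by the
indicator of `(-1/2,1/2)` resp. of its complement). Let `W₀` be bounded with
`J₀W₀ - I ≥ 0`, `W₀f = J₀f` a.e. on `1/2 ≤ |x| ≤ 1` and `W₀ F_max ⊆ F_max`, and let
`W₋₁` be bounded with `J₀W₋₁ - I ≥ 0`, `W₋₁f = J₀f` a.e. on `-1/2 ≤ x ≤ 1`,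
`W₋₁ F_max ⊆ F_max[-1,0] ⊕ F_max[0,1]` and `(W₋₁f)(-1) = f(-1)` on `F_max`. Then `K₀`
and `K₁` are invariant under `W₀` and `W₋₁`, and `W₀₁ = W₀P₀ + W₋₁P₁` is bounded and
boundedly invertible with `J₀W₀₁ - I ≥ 0` (hence `W₀₁` is positive in the Krein space),
maps `F_max` into `F_max`, and satisfies `(W₀₁f)(-1) = f(-1)`, `(W₀₁f)(1) = f(1)` on
`F_max`. -/
theorem W01_glued_operator (p q r : ℝ → ℝ) (hc : Coeffs p q r)
    (P0 P1 W0 W1 : Pa r →L[ℂ] Pa r)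
    (hP0 : ∀ f : Pa r, (P0 f : ℝ → ℂ) =ᵐ[wM r (Set.Icc (-1 : ℝ) 1)]
      fun x => if x ∈ Set.Ioo (-(1 / 2) : ℝ) (1 / 2) then (f : ℝ → ℂ) x else 0)
    (hP1 : ∀ f : Pa r, (P1 f : ℝ → ℂ) =ᵐ[wM r (Set.Icc (-1 : ℝ) 1)]
      fun x => if x ∈ Set.Ioo (-(1 / 2) : ℝ) (1 / 2) then 0 else (f : ℝ → ℂ) x)
    -- `J₀W₀ - I` is nonnegative
    (hW0nn : ∀ f : Pa r,
      (krein0 r ⇑(W0 f) ⇑f).im = 0 ∧ ‖f‖ ^ 2 ≤ (krein0 r ⇑(W0 f) ⇑f).re)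
    -- `W₀ f = J₀ f` a.e. on `1/2 ≤ |x| ≤ 1`
    (hW0c : ∀ f : Pa r, ∀ᵐ x ∂(wM r (Set.Icc (-1 : ℝ) 1)),
      1 / 2 ≤ |x| → (W0 f : ℝ → ℂ) x = ((Real.sign (r x) : ℝ) : ℂ) * (f : ℝ → ℂ) x)
    -- `W₀ F_max ⊆ F_max`
    (hW0F : ∀ f : Pa r, InFmax p r (-1) 1 ⇑f → InFmax p r (-1) 1 ⇑(W0 f))
    -- `J₀W₋₁ - I` is nonnegative
    (hW1nn : ∀ f : Pa r,
      (krein0 r ⇑(W1 f) ⇑f).im = 0 ∧ ‖f‖ ^ 2 ≤ (krein0 r ⇑(W1 f) ⇑f).re)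
    -- `W₋₁ f = J₀ f` a.e. on `-1/2 ≤ x ≤ 1`
    (hW1c : ∀ f : Pa r, ∀ᵐ x ∂(wM r (Set.Icc (-1 : ℝ) 1)),
      -(1 / 2) ≤ x → (W1 f : ℝ → ℂ) x = ((Real.sign (r x) : ℝ) : ℂ) * (f : ℝ → ℂ) x)
    -- `W₋₁ F_max ⊆ F_max[-1,0] ⊕ F_max[0,1]`
    (hW1F : ∀ f : Pa r, InFmax p r (-1) 1 ⇑f →
      InFmax p r (-1) 0 ⇑(W1 f) ∧ InFmax p r 0 1 ⇑(W1 f))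
    -- `(W₋₁ f)(-1) = f(-1)` for `f ∈ F_max`
    (hW1bd : ∀ (f : Pa r) (g g' : ℝ → ℂ), (⇑f =ᵐ[wM r (Set.Icc (-1 : ℝ) 1)] g) →
      ACOn g g' (-1) 1 →
      IntegrableOn (fun x => p x * ‖g' x‖ ^ 2) (Set.Icc (-1 : ℝ) 1) →
      ∀ G G' : ℝ → ℂ, (⇑(W1 f) =ᵐ[wM r (Set.Icc (-1 : ℝ) 0)] G) →
        ACOn G G' (-1) 0 → G (-1) = g (-1))
    (W01 : Pa r →L[ℂ] Pa r) (hW01 : W01 = W0.comp P0 + W1.comp P1) :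
    -- `K₀` and `K₁` are invariant under `W₀` and `W₋₁`
    (∀ f : Pa r, InK0 r f → InK0 r (W0 f) ∧ InK0 r (W1 f)) ∧
    (∀ f : Pa r, InK1 r f → InK1 r (W0 f) ∧ InK1 r (W1 f)) ∧
    -- `W₀₁` is boundedly invertible
    (∃ V : Pa r →L[ℂ] Pa r, W01.comp V = ContinuousLinearMap.id ℂ (Pa r) ∧
      V.comp W01 = ContinuousLinearMap.id ℂ (Pa r)) ∧
    -- `J₀W₀₁ - I` is nonnegative
    (∀ f : Pa r,
      (krein0 r ⇑(W01 f) ⇑f).im = 0 ∧ ‖f‖ ^ 2 ≤ (krein0 r ⇑(W01 f) ⇑f).re) ∧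
    -- so `W₀₁` is positive in the Krein space
    (∀ f : Pa r, f ≠ 0 →
      0 < (krein0 r ⇑(W01 f) ⇑f).re ∧ (krein0 r ⇑(W01 f) ⇑f).im = 0) ∧
    -- `W₀₁ F_max ⊆ F_max`
    (∀ f : Pa r, InFmax p r (-1) 1 ⇑f → InFmax p r (-1) 1 ⇑(W01 f)) ∧
    -- `(W₀₁ f)(±1) = f(±1)` for `f ∈ F_max`
    (∀ (f : Pa r) (g g' : ℝ → ℂ), (⇑f =ᵐ[wM r (Set.Icc (-1 : ℝ) 1)] g) →
      ACOn g g' (-1) 1 →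
      IntegrableOn (fun x => p x * ‖g' x‖ ^ 2) (Set.Icc (-1 : ℝ) 1) →
      ∀ G G' : ℝ → ℂ, (⇑(W01 f) =ᵐ[wM r (Set.Icc (-1 : ℝ) 1)] G) →
        ACOn G G' (-1) 1 → G (-1) = g (-1) ∧ G 1 = g 1) := by

  classical
  have hrm : AEStronglyMeasurable r (volume.restrict (Set.Icc (-1 : ℝ) 1)) := hc.2.2.1.1
  have hvol : ∀ᵐ x ∂(volume.restrict (Set.Icc (-1 : ℝ) 1)),
      r x ≠ 0 ∧ 0 < p x ∧ (x < 0 → Real.sign (r x) = -1) ∧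
        (0 < x → Real.sign (r x) = 1) ∧ x ≠ 0 := by
    refine hc.2.2.2.mono fun x hx => ?_
    obtain ⟨hp, hxr⟩ := hx
    have hxne : x ≠ 0 := by rintro rfl; rw [zero_mul] at hxr; exact lt_irrefl 0 hxr
    have hrne : r x ≠ 0 := fun h0 => by rw [h0, mul_zero] at hxr; exact lt_irrefl 0 hxr
    refine ⟨hrne, hp, fun hneg => ?_, fun hpos => ?_, hxne⟩
    · have : r x < 0 := by nlinarith
      exact Real.sign_of_neg this
    · have : 0 < r x := by nlinarith
      exact Real.sign_of_pos this
  have hμfacts : ∀ᵐ x ∂(wM r (Set.Icc (-1 : ℝ) 1)), (r x ≠ 0 ∧ 0 < p x ∧ (x < 0 → Real.sign (r x) = -1) ∧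
      (0 < x → Real.sign (r x) = 1) ∧ x ≠ 0) ∧ x ∈ Set.Icc (-1 : ℝ) 1 :=
    (ae_wM_of_ae hvol).and (ae_wM_of_ae (ae_restrict_mem measurableSet_Icc))
  -- localization for W0 and W1
  have W0loc : ∀ g : Pa r,
      (∀ᵐ x ∂(wM r (Set.Icc (-1 : ℝ) 1)), x ∈ Set.Ioo (-(1 / 2) : ℝ) (1 / 2) → (g : ℝ → ℂ) x = 0) →
      ⇑(W0 g) =ᵐ[(wM r (Set.Icc (-1 : ℝ) 1))] fun x => ((Real.sign (r x) : ℝ) : ℂ) * (g : ℝ → ℂ) x := by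
    intro g hg
    refine localize p q hc W0 (Set.Ioo (-(1 / 2) : ℝ) (1 / 2)) (fun f => (hW0nn f).1)
      (fun f => ?_) g hg
    exact (hW0c f).mono fun x hx hxS => hx (half_le_abs hxS)
  have W1loc : ∀ g : Pa r,
      (∀ᵐ x ∂(wM r (Set.Icc (-1 : ℝ) 1)), x < -(1 / 2 : ℝ) → (g : ℝ → ℂ) x = 0) →
      ⇑(W1 g) =ᵐ[(wM r (Set.Icc (-1 : ℝ) 1))] fun x => ((Real.sign (r x) : ℝ) : ℂ) * (g : ℝ → ℂ) x := by
    intro g hg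
    refine localize p q hc W1 (Set.Iio (-(1 / 2) : ℝ)) (fun f => (hW1nn f).1)
      (fun f => ?_) g (hg.mono fun x hx hxS => hx hxS)
    exact (hW1c f).mono fun x hx hxS => hx (not_lt.mp hxS)
  -- invariance of K0
  have hK0 : ∀ f : Pa r, InK0 r f → InK0 r (W0 f) ∧ InK0 r (W1 f) := by
    intro f hf
    constructor
    · filter_upwards [hW0c f, hf] with x h1 h2 hx
      rw [h1 (half_le_abs hx), h2 hx, mul_zero]
    · have hW := W1loc f (hf.mono fun x hx hlt => hx fun hmem => by
        have := hmem.1; linarith)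
      filter_upwards [hW, hf] with x h1 h2 hx
      rw [h1, h2 hx, mul_zero]
  -- invariance of K1
  have hK1 : ∀ f : Pa r, InK1 r f → InK1 r (W0 f) ∧ InK1 r (W1 f) := by
    intro f hf
    constructor
    · have hW := W0loc f hf
      filter_upwards [hW, hf] with x h1 h2 hx
      rw [h1, h2 hx, mul_zero]
    · filter_upwards [hW1c f, hf] with x h1 h2 hx
      rw [h1 (by have := hx.1; linarith), h2 hx, mul_zero]
  -- projections add up to the identity
  have hsplit : ∀ f : Pa r, P0 f + P1 f = f := by
    intro f
    apply Lp.ext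
    filter_upwards [Lp.coeFn_add (P0 f) (P1 f), hP0 f, hP1 f] with x h1 h2 h3
    rw [h1, Pi.add_apply, h2, h3]
    by_cases hx : x ∈ Set.Ioo (-(1 / 2) : ℝ) (1 / 2)
    · rw [if_pos hx, if_pos hx, add_zero]
    · rw [if_neg hx, if_neg hx, zero_add]
  have hP0z : ∀ f : Pa r, InK0 r (P0 f) := fun f =>
    (hP0 f).mono fun x hx h => by rw [hx]; exact if_neg h
  have hP1z : ∀ f : Pa r, InK1 r (P1 f) := fun f =>
    (hP1 f).mono fun x hx h => by rw [hx]; exact if_pos h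
  have hW0P1 : ∀ f : Pa r, ⇑(W0 (P1 f)) =ᵐ[(wM r (Set.Icc (-1 : ℝ) 1))]
      fun x => ((Real.sign (r x) : ℝ) : ℂ) * (P1 f : ℝ → ℂ) x := fun f =>
    W0loc (P1 f) (hP1z f)
  have hW1P0 : ∀ f : Pa r, ⇑(W1 (P0 f)) =ᵐ[(wM r (Set.Icc (-1 : ℝ) 1))]
      fun x => ((Real.sign (r x) : ℝ) : ℂ) * (P0 f : ℝ → ℂ) x := fun f =>
    W1loc (P0 f) ((hP0z f).mono fun x hx hlt => hx fun hmem => by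
      have := hmem.1; linarith)
  -- key identity : W01 = W0 + W1 - J0  (a.e.)
  have hE : ∀ f : Pa r, ⇑(W01 f) =ᵐ[(wM r (Set.Icc (-1 : ℝ) 1))] fun x => (W0 f : ℝ → ℂ) x + (W1 f : ℝ → ℂ) x
      - ((Real.sign (r x) : ℝ) : ℂ) * (f : ℝ → ℂ) x := by
    intro f
    have h0 : P0 f = f - P1 f := by rw [eq_sub_iff_add_eq, hsplit f]
    have h1 : P1 f = f - P0 f := by rw [eq_sub_iff_add_eq, add_comm, hsplit f]
    have hop : W01 f = W0 f + W1 f - (W0 (P1 f) + W1 (P0 f)) := by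
      rw [hW01]
      simp only [ContinuousLinearMap.add_apply, ContinuousLinearMap.comp_apply]
      nth_rewrite 1 [h0]
      nth_rewrite 2 [h1]
      rw [map_sub, map_sub]
      abel
    rw [hop]
    have c1 : ⇑(W0 f + W1 f - (W0 (P1 f) + W1 (P0 f))) =ᵐ[(wM r (Set.Icc (-1 : ℝ) 1))]
        fun x => (W0 f : ℝ → ℂ) x + (W1 f : ℝ → ℂ) x
          - ((W0 (P1 f) : ℝ → ℂ) x + (W1 (P0 f) : ℝ → ℂ) x) := by
      filter_upwards [Lp.coeFn_sub (W0 f + W1 f) (W0 (P1 f) + W1 (P0 f)),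
        Lp.coeFn_add (W0 f) (W1 f), Lp.coeFn_add (W0 (P1 f)) (W1 (P0 f))] with x e1 e2 e3
      rw [e1, Pi.sub_apply, e2, e3, Pi.add_apply, Pi.add_apply]
    filter_upwards [c1, hW0P1 f, hW1P0 f, hP0 f, hP1 f] with x e1 e2 e3 e4 e5
    rw [e1, e2, e3, e4, e5]
    by_cases hx : x ∈ Set.Ioo (-(1 / 2) : ℝ) (1 / 2)
    · rw [if_pos hx, if_pos hx]; ring
    · rw [if_neg hx, if_neg hx]; ring
  -- vanishing of cross terms
  have kzero : ∀ u w : ℝ → ℂ, (∀ᵐ x ∂(wM r (Set.Icc (-1 : ℝ) 1)), u x * (starRingEnd ℂ) (w x) = 0) →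
      krein0 r u w = 0 := by
    intro u w h
    rw [krein0_eq_wM hrm]
    have hz : (fun x => ((Real.sign (r x) : ℝ) : ℂ) * u x * (starRingEnd ℂ) (w x)) =ᵐ[(wM r (Set.Icc (-1 : ℝ) 1))]
        0 := by
      filter_upwards [h] with x hx
      rw [Pi.zero_apply, mul_assoc, hx, mul_zero]
    rw [integral_congr_ae hz]
    simp
  have cross1 : ∀ f : Pa r, krein0 r ⇑(W0 (P0 f)) ⇑(P1 f) = 0 := by
    intro f
    refine kzero _ _ ?_
    filter_upwards [(hK0 (P0 f) (hP0z f)).1, hP1z f] with x h1 h2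
    by_cases hx : x ∈ Set.Ioo (-(1 / 2) : ℝ) (1 / 2)
    · rw [h2 hx, map_zero, mul_zero]
    · rw [h1 hx, zero_mul]
  have cross2 : ∀ f : Pa r, krein0 r ⇑(W1 (P1 f)) ⇑(P0 f) = 0 := by
    intro f
    refine kzero _ _ ?_
    filter_upwards [(hK1 (P1 f) (hP1z f)).2, hP0z f] with x h1 h2
    by_cases hx : x ∈ Set.Ioo (-(1 / 2) : ℝ) (1 / 2)
    · rw [h1 hx, zero_mul]
    · rw [h2 hx, map_zero, mul_zero]
  -- decomposition of the form
  have hdec : ∀ f : Pa r, krein0 r ⇑(W01 f) ⇑f =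
      krein0 r ⇑(W0 (P0 f)) ⇑(P0 f) + krein0 r ⇑(W1 (P1 f)) ⇑(P1 f) := by
    intro f
    have hop : W01 f = W0 (P0 f) + W1 (P1 f) := by
      rw [hW01]
      simp only [ContinuousLinearMap.add_apply, ContinuousLinearMap.comp_apply]
    have e0 : ⇑(W01 f) =ᵐ[(wM r (Set.Icc (-1 : ℝ) 1))] ⇑(W0 (P0 f)) + ⇑(W1 (P1 f)) := by
      rw [hop]; exact Lp.coeFn_add _ _
    have e1 : ⇑f =ᵐ[(wM r (Set.Icc (-1 : ℝ) 1))] ⇑(P0 f) + ⇑(P1 f) := by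
      have h := Lp.coeFn_add (P0 f) (P1 f)
      rw [hsplit f] at h
      exact h
    rw [krein0_eq_wM hrm, krein0_eq_wM hrm, krein0_eq_wM hrm]
    have h4 : (fun x => ((Real.sign (r x) : ℝ) : ℂ) * (W01 f : ℝ → ℂ) x *
        (starRingEnd ℂ) ((f : ℝ → ℂ) x)) =ᵐ[(wM r (Set.Icc (-1 : ℝ) 1))]
        (fun x => (((Real.sign (r x) : ℝ) : ℂ) * (W0 (P0 f) : ℝ → ℂ) x *
            (starRingEnd ℂ) ((P0 f : ℝ → ℂ) x) +
          ((Real.sign (r x) : ℝ) : ℂ) * (W0 (P0 f) : ℝ → ℂ) x *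
            (starRingEnd ℂ) ((P1 f : ℝ → ℂ) x)) +
          (((Real.sign (r x) : ℝ) : ℂ) * (W1 (P1 f) : ℝ → ℂ) x *
            (starRingEnd ℂ) ((P0 f : ℝ → ℂ) x) +
          ((Real.sign (r x) : ℝ) : ℂ) * (W1 (P1 f) : ℝ → ℂ) x *
            (starRingEnd ℂ) ((P1 f : ℝ → ℂ) x))) := by
      filter_upwards [e0, e1] with x h0 h1
      rw [h0, h1, Pi.add_apply, Pi.add_apply, map_add]
      ring
    rw [integral_congr_ae h4,
      integral_add4 (integrable_core hrm (W0 (P0 f)) (P0 f))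
        (integrable_core hrm (W0 (P0 f)) (P1 f))
        (integrable_core hrm (W1 (P1 f)) (P0 f))
        (integrable_core hrm (W1 (P1 f)) (P1 f))]
    have z1 : ∫ x, ((Real.sign (r x) : ℝ) : ℂ) * (W0 (P0 f) : ℝ → ℂ) x *
        (starRingEnd ℂ) ((P1 f : ℝ → ℂ) x) ∂(wM r (Set.Icc (-1 : ℝ) 1)) = 0 := by
      rw [← krein0_eq_wM hrm]; exact cross1 f
    have z2 : ∫ x, ((Real.sign (r x) : ℝ) : ℂ) * (W1 (P1 f) : ℝ → ℂ) x *
        (starRingEnd ℂ) ((P0 f : ℝ → ℂ) x) ∂(wM r (Set.Icc (-1 : ℝ) 1)) = 0 := by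
      rw [← krein0_eq_wM hrm]; exact cross2 f
    rw [z1, z2, add_zero, zero_add]
  -- Pythagoras
  have hpyth : ∀ f : Pa r, ‖f‖ ^ 2 = ‖P0 f‖ ^ 2 + ‖P1 f‖ ^ 2 := by
    intro f
    have horth : (inner ℂ (P0 f) (P1 f) : ℂ) = 0 := by
      rw [L2.inner_def]
      have hz : (fun x => (inner ℂ ((P0 f : ℝ → ℂ) x) ((P1 f : ℝ → ℂ) x) : ℂ)) =ᵐ[(wM r (Set.Icc (-1 : ℝ) 1))] 0 := by
        filter_upwards [hP0 f, hP1 f] with x h2 h3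
        rw [RCLike.inner_apply, h2, h3, Pi.zero_apply]
        by_cases hx : x ∈ Set.Ioo (-(1 / 2) : ℝ) (1 / 2)
        · rw [if_pos hx, if_pos hx, zero_mul]
        · rw [if_neg hx, if_neg hx, map_zero, mul_zero]
      rw [integral_congr_ae hz]
      simp
    have := @norm_add_sq ℂ _ _ _ _ (P0 f) (P1 f)
    rw [horth] at this
    simp only [map_zero, mul_zero, add_zero, zero_add] at this
    calc ‖f‖ ^ 2 = ‖P0 f + P1 f‖ ^ 2 := by rw [hsplit f]
      _ = ‖P0 f‖ ^ 2 + ‖P1 f‖ ^ 2 := by rw [this]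
  -- nonnegativity of J0 W01 - I
  have c4 : ∀ f : Pa r,
      (krein0 r ⇑(W01 f) ⇑f).im = 0 ∧ ‖f‖ ^ 2 ≤ (krein0 r ⇑(W01 f) ⇑f).re := by
    intro f
    constructor
    · rw [hdec f, Complex.add_im, (hW0nn (P0 f)).1, (hW1nn (P1 f)).1, add_zero]
    · rw [hdec f, Complex.add_re, hpyth f]
      have h1 := (hW0nn (P0 f)).2
      have h2 := (hW1nn (P1 f)).2
      linarith
  -- multiplication by sign, as a map on Lp
  have hsgnmem : ∀ u : Pa r,
      MemLp (fun x => ((Real.sign (r x) : ℝ) : ℂ) * (u : ℝ → ℂ) x) 2 (wM r (Set.Icc (-1 : ℝ) 1)) := by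
    intro u
    refine MemLp.of_le (Lp.memLp u) ((sgn_aesm hrm).mul (Lp.aestronglyMeasurable u)) ?_
    refine Filter.Eventually.of_forall fun x => ?_
    rw [norm_mul]
    calc ‖((Real.sign (r x) : ℝ) : ℂ)‖ * ‖(u : ℝ → ℂ) x‖
        ≤ 1 * ‖(u : ℝ → ℂ) x‖ := by gcongr; simpa using abs_sgn_le (r x)
      _ = _ := one_mul _
  set J : Pa r → Pa r := fun u => (hsgnmem u).toLp _ with hJdef
  have hJc : ∀ u : Pa r, ⇑(J u) =ᵐ[(wM r (Set.Icc (-1 : ℝ) 1))] fun x => ((Real.sign (r x) : ℝ) : ℂ) * (u : ℝ → ℂ) x :=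
    fun u => (hsgnmem u).coeFn_toLp
  have habs1 : ∀ᵐ x ∂(wM r (Set.Icc (-1 : ℝ) 1)), ‖((Real.sign (r x) : ℝ) : ℂ)‖ = 1 := by
    filter_upwards [hμfacts] with x hx
    rcases Real.sign_apply_eq_of_ne_zero _ hx.1.1 with h | h <;> simp [h]
  have hJnorm : ∀ u : Pa r, ‖J u‖ = ‖u‖ := by
    intro u
    rw [Lp.norm_def, Lp.norm_def]
    congr 1
    rw [eLpNorm_congr_ae (hJc u)]
    refine eLpNorm_congr_norm_ae ?_
    filter_upwards [habs1] with x hx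
    rw [norm_mul, hx, one_mul]
  have hkrein_inner : ∀ u g : Pa r, krein0 r ⇑u ⇑g = (inner ℂ g (J u) : ℂ) := by
    intro u g
    rw [krein0_eq_wM hrm, L2.inner_def]
    refine integral_congr_ae ?_
    filter_upwards [hJc u] with x hx
    rw [RCLike.inner_apply, hx]
  -- W01 is bounded below
  have hlow : ∀ f : Pa r, ‖f‖ ≤ ‖W01 f‖ := by
    intro f
    by_cases hf : f = 0
    · simp [hf]
    have h1 : ‖f‖ ^ 2 ≤ ‖f‖ * ‖W01 f‖ := by
      calc ‖f‖ ^ 2 ≤ (krein0 r ⇑(W01 f) ⇑f).re := (c4 f).2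
        _ ≤ ‖krein0 r ⇑(W01 f) ⇑f‖ := by
            exact Complex.re_le_norm _
        _ = ‖(inner ℂ f (J (W01 f)) : ℂ)‖ := by rw [hkrein_inner]
        _ ≤ ‖f‖ * ‖J (W01 f)‖ := norm_inner_le_norm _ _
        _ = ‖f‖ * ‖W01 f‖ := by rw [hJnorm]
    have hfpos : 0 < ‖f‖ := norm_pos_iff.mpr hf
    nlinarith
  have hker : LinearMap.ker (W01 : Pa r →ₗ[ℂ] Pa r) = ⊥ := by
    rw [LinearMap.ker_eq_bot']
    intro m hm
    have h := hlow m
    rw [show W01 m = 0 from hm, norm_zero] at h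
    exact norm_le_zero_iff.mp h
  have hclosed : IsClosed (Set.range ⇑W01) :=
    (W01.antilipschitz_of_bound (K := 1) fun x => by simpa using hlow x).isClosed_range
      W01.uniformContinuous
  have hrange : LinearMap.range (W01 : Pa r →ₗ[ℂ] Pa r) = ⊤ := by
    have hcl : IsClosed ((LinearMap.range (W01 : Pa r →ₗ[ℂ] Pa r) : Submodule ℂ (Pa r)) : Set (Pa r)) := by
      rw [LinearMap.coe_range]; exact hclosed
    haveI : CompleteSpace (LinearMap.range (W01 : Pa r →ₗ[ℂ] Pa r) : Submodule ℂ (Pa r)) :=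
      hcl.completeSpace_coe
    rw [← Submodule.orthogonal_eq_bot_iff, Submodule.eq_bot_iff]
    intro g hg
    set h : Pa r := J g with hhdef
    have hzero : (inner ℂ (W01 h) g : ℂ) = 0 :=
      hg (W01 h) (LinearMap.mem_range.mpr ⟨h, rfl⟩)
    have hk : krein0 r ⇑(W01 h) ⇑h = (starRingEnd ℂ) (inner ℂ (W01 h) g : ℂ) := by
      rw [krein0_eq_wM hrm, L2.inner_def, ← integral_conj]
      refine integral_congr_ae ?_
      filter_upwards [hJc g, hμfacts] with x hx hfx
      have hsq : ((Real.sign (r x) : ℝ) : ℂ) * ((Real.sign (r x) : ℝ) : ℂ) = 1 :=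
        sq_sgn hfx.1.1
      have hc1 : (starRingEnd ℂ) (((Real.sign (r x) : ℝ) : ℂ) * (g : ℝ → ℂ) x)
          = ((Real.sign (r x) : ℝ) : ℂ) * (starRingEnd ℂ) ((g : ℝ → ℂ) x) := by
        rw [map_mul, Complex.conj_ofReal]
      have hc2 : (starRingEnd ℂ) ((g : ℝ → ℂ) x * (starRingEnd ℂ) ((W01 h : ℝ → ℂ) x))
          = (W01 h : ℝ → ℂ) x * (starRingEnd ℂ) ((g : ℝ → ℂ) x) := by
        rw [map_mul, Complex.conj_conj, mul_comm]
      rw [hx, hc1, RCLike.inner_apply, hc2]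
      calc ((Real.sign (r x) : ℝ) : ℂ) * (W01 h : ℝ → ℂ) x *
            (((Real.sign (r x) : ℝ) : ℂ) * (starRingEnd ℂ) ((g : ℝ → ℂ) x))
          = (((Real.sign (r x) : ℝ) : ℂ) * ((Real.sign (r x) : ℝ) : ℂ)) *
            ((W01 h : ℝ → ℂ) x * (starRingEnd ℂ) ((g : ℝ → ℂ) x)) := by ring
        _ = (W01 h : ℝ → ℂ) x * (starRingEnd ℂ) ((g : ℝ → ℂ) x) := by rw [hsq, one_mul]
    have h1 : ‖h‖ ^ 2 ≤ (krein0 r ⇑(W01 h) ⇑h).re := (c4 h).2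
    rw [hk, hzero, map_zero, Complex.zero_re] at h1
    have hh0 : h = 0 := by
      have : ‖h‖ = 0 := by nlinarith [norm_nonneg h]
      exact norm_eq_zero.mp this
    have : ‖g‖ = 0 := by rw [← hJnorm g, ← hhdef, hh0, norm_zero]
    exact norm_eq_zero.mp this
  -- the inverse
  have c3 : ∃ V : Pa r →L[ℂ] Pa r, W01.comp V = ContinuousLinearMap.id ℂ (Pa r) ∧
      V.comp W01 = ContinuousLinearMap.id ℂ (Pa r) := by
    set e := ContinuousLinearEquiv.ofBijective W01 hker hrange with hedef
    refine ⟨(e.symm : Pa r →L[ℂ] Pa r), ?_, ?_⟩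
    · ext f
      have := e.apply_symm_apply f
      simpa [hedef] using this
    · ext f
      have := e.symm_apply_apply f
      simpa [hedef] using this
  -- shared infrastructure for the F_max statements
  have hseteq0 : Set.Iic (0 : ℝ) ∩ Set.Icc (-1 : ℝ) 1 = Set.Icc (-1 : ℝ) 0 := by
    ext x
    simp only [Set.mem_inter_iff, Set.mem_Iic, Set.mem_Icc]
    constructor
    · rintro ⟨h1, h2, h3⟩; exact ⟨h2, h1⟩
    · rintro ⟨h1, h2⟩; exact ⟨h2, h1, by linarith⟩
  have hsubIic : ∀ u w : ℝ → ℂ, (u =ᵐ[wM r (Set.Icc (-1 : ℝ) 0)] w) →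
      ∀ᵐ x ∂(wM r (Set.Icc (-1 : ℝ) 1)), x ∈ Set.Iic (0 : ℝ) → u x = w x := by
    intro u w hu
    have hres : (wM r (Set.Icc (-1 : ℝ) 1)).restrict (Set.Iic (0 : ℝ))
        = wM r (Set.Icc (-1 : ℝ) 0) := by
      rw [wM_restrict measurableSet_Iic, hseteq0]
    have h1 : ∀ᵐ x ∂((wM r (Set.Icc (-1 : ℝ) 1)).restrict (Set.Iic (0 : ℝ))), u x = w x := by
      rw [hres]; exact hu
    exact (ae_restrict_iff' measurableSet_Iic).mp h1
  have hdown : ∀ a b : ℝ, Set.Icc a b ⊆ Set.Icc (-1 : ℝ) 1 → ∀ u w : ℝ → ℂ,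
      (∀ᵐ x ∂(wM r (Set.Icc (-1 : ℝ) 1)), x ∈ Set.Icc a b → u x = w x) →
      u =ᵐ[volume.restrict (Set.Icc a b)] w := by
    intro a b hsub u w h
    have hres : (wM r (Set.Icc (-1 : ℝ) 1)).restrict (Set.Icc a b) = wM r (Set.Icc a b) := by
      rw [wM_restrict measurableSet_Icc, Set.inter_eq_left.mpr hsub]
    have h2 : ∀ᵐ x ∂(wM r (Set.Icc a b)), x ∈ Set.Icc a b → u x = w x := by
      rw [← hres]; exact ae_restrict_of_ae h
    have hrm' : AEStronglyMeasurable r (volume.restrict (Set.Icc a b)) :=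
      hrm.mono_measure (Measure.restrict_mono hsub le_rfl)
    have h3 := ae_of_ae_wM hrm' h2
    have h4 : ∀ᵐ x ∂(volume.restrict (Set.Icc a b)), r x ≠ 0 :=
      (hvol.filter_mono (ae_mono (Measure.restrict_mono hsub le_rfl))).mono fun x hx => hx.1
    have h5 : ∀ᵐ x ∂(volume.restrict (Set.Icc a b)), x ∈ Set.Icc a b :=
      ae_restrict_mem measurableSet_Icc
    filter_upwards [h3, h4, h5] with x e3 e4 e5
    exact e3 e4 e5
  refine ⟨hK0, hK1, c3, c4, ?_, ?_, ?_⟩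
  · intro f hf
    refine ⟨lt_of_lt_of_le (pow_pos (norm_pos_iff.mpr hf) 2) (c4 f).2, (c4 f).1⟩
  · -- F_max invariance of W01
    intro f hf
    obtain ⟨hfL2, g₀, g', hfg, hACg, hint_g⟩ := hf
    obtain ⟨-, h₀, h', hWh, hACh, hint_h⟩ := hW0F f ⟨hfL2, g₀, g', hfg, hACg, hint_g⟩
    obtain ⟨⟨-, k₀, k', hWk, hACk, hint_k⟩, -⟩ := hW1F f ⟨hfL2, g₀, g', hfg, hACg, hint_g⟩
    have hcg : ContinuousOn g₀ (Set.Icc (-1 : ℝ) 1) := ACOn_continuousOn hACg (by norm_num)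
    have hck : ContinuousOn k₀ (Set.Icc (-1 : ℝ) 0) := ACOn_continuousOn hACk (by norm_num)
    have hk1 := hsubIic _ _ hWk
    -- k₀ = -g₀ on [-1/2, 0]
    have hkg : ∀ x ∈ Set.Icc (-(1 / 2) : ℝ) 0, k₀ x = -g₀ x := by
      have hae : ∀ᵐ x ∂(wM r (Set.Icc (-1 : ℝ) 1)), x ∈ Set.Icc (-(1 / 2) : ℝ) 0 →
          k₀ x = -g₀ x := by
        filter_upwards [hk1, hW1c f, hfg, hμfacts] with x e1 e2 e3 e4 hx
        have hxlt : x < 0 := lt_of_le_of_ne hx.2 e4.1.2.2.2.2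
        rw [← e1 hx.2, e2 hx.1, e4.1.2.2.1 hxlt, e3]
        push_cast
        ring
      have hae2 := hdown (-(1 / 2)) 0 (fun x hx => ⟨by linarith [hx.1], by linarith [hx.2]⟩)
        _ _ hae
      have heq := MeasureTheory.Measure.eqOn_Icc_of_ae_eq volume
        (by norm_num : (-(1 / 2) : ℝ) ≠ 0) hae2
        (hck.mono fun x hx => ⟨by linarith [hx.1], hx.2⟩)
        ((hcg.mono fun x hx => ⟨by linarith [hx.1], by linarith [hx.2]⟩).neg)
      exact fun x hx => heq hx
    have hkg0 : k₀ 0 + g₀ 0 = 0 := by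
      have := hkg 0 ⟨by norm_num, le_refl 0⟩
      rw [this]; ring
    refine ⟨Lp.memLp _, fun x => h₀ x + Set.indicator (Set.Iic (0 : ℝ))
      (fun t => k₀ t + g₀ t) x, fun x => h' x + Set.indicator (Set.Iic (0 : ℝ))
      (fun t => k' t + g' t) x, ?_, ⟨?_, ?_⟩, ?_⟩
    · -- a.e. identification
      filter_upwards [hE f, hWh, hk1, hfg, hW1c f, hμfacts] with x e0 e1 e2 e3 e4 e5
      rw [e0]
      by_cases hx : x ≤ 0
      · have hxlt : x < 0 := lt_of_le_of_ne hx e5.1.2.2.2.2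
        rw [Set.indicator_of_mem (Set.mem_Iic.mpr hx), e1, e2 hx, e3, e5.1.2.2.1 hxlt]
        push_cast
        ring
      · have hxpos : 0 < x := lt_of_not_ge hx
        rw [Set.indicator_of_notMem (fun h => hx (Set.mem_Iic.mp h)), e1,
          e4 (by linarith), e3, e5.1.2.2.2.1 hxpos]
        push_cast
        ring
    · -- interval integrability of the derivative
      have hsub10 : Set.uIcc (-1 : ℝ) 0 ⊆ Set.uIcc (-1 : ℝ) 1 := by
        rw [Set.uIcc_of_le (by norm_num : (-1 : ℝ) ≤ 0),
          Set.uIcc_of_le (by norm_num : (-1 : ℝ) ≤ 1)]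
        exact Set.Icc_subset_Icc le_rfl (by norm_num)
      have hii_k : IntervalIntegrable (fun t => k' t + g' t) volume (-1) 0 :=
        hACk.1.add (hACg.1.mono_set hsub10)
      have hind1 : IntervalIntegrable (Set.indicator (Set.Iic (0 : ℝ))
          fun t => k' t + g' t) volume (-1) 0 := by
        rw [intervalIntegrable_iff_integrableOn_Ioc_of_le (by norm_num : (-1 : ℝ) ≤ 0)]
        refine ((intervalIntegrable_iff_integrableOn_Ioc_of_le
          (by norm_num : (-1 : ℝ) ≤ 0)).mp hii_k).congr_fun ?_ measurableSet_Ioc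
        intro x hx
        exact (Set.indicator_of_mem (Set.mem_Iic.mpr hx.2) (fun t => k' t + g' t)).symm
      have hind2 : IntervalIntegrable (Set.indicator (Set.Iic (0 : ℝ))
          fun t => k' t + g' t) volume 0 1 := by
        rw [intervalIntegrable_iff_integrableOn_Ioc_of_le (by norm_num : (0 : ℝ) ≤ 1)]
        refine (integrableOn_zero :
          IntegrableOn (fun _ : ℝ => (0 : ℂ)) (Set.Ioc (0 : ℝ) 1) volume).congr_fun ?_
          measurableSet_Ioc
        intro x hx
        exact (Set.indicator_of_notMem (fun h => absurd (Set.mem_Iic.mp h)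
          (not_le.mpr hx.1)) (fun t => k' t + g' t)).symm
      exact hACh.1.add (hind1.trans hind2)
    · -- the FTC identity
      intro x hx
      show h₀ x + (Set.Iic (0 : ℝ)).indicator (fun t => k₀ t + g₀ t) x
        = (h₀ (-1) + (Set.Iic (0 : ℝ)).indicator (fun t => k₀ t + g₀ t) (-1))
          + ∫ t in (-1 : ℝ)..x, (h' t + (Set.Iic (0 : ℝ)).indicator
            (fun t => k' t + g' t) t)
      have hΦa : h₀ (-1) + Set.indicator (Set.Iic (0 : ℝ)) (fun t => k₀ t + g₀ t) (-1)
          = h₀ (-1) + (k₀ (-1) + g₀ (-1)) := by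
        rw [Set.indicator_of_mem (Set.mem_Iic.mpr (by norm_num : (-1 : ℝ) ≤ 0))]
      have hsub10 : Set.uIcc (-1 : ℝ) 0 ⊆ Set.uIcc (-1 : ℝ) 1 := by
        rw [Set.uIcc_of_le (by norm_num : (-1 : ℝ) ≤ 0),
          Set.uIcc_of_le (by norm_num : (-1 : ℝ) ≤ 1)]
        exact Set.Icc_subset_Icc le_rfl (by norm_num)
      have hii_k : IntervalIntegrable (fun t => k' t + g' t) volume (-1) 0 :=
        hACk.1.add (hACg.1.mono_set hsub10)
      have hsubx : ∀ y : ℝ, -1 ≤ y → y ≤ 0 → Set.uIcc (-1 : ℝ) y ⊆ Set.uIcc (-1 : ℝ) 0 := by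
        intro y hy1 hy2
        rw [Set.uIcc_of_le hy1, Set.uIcc_of_le (by norm_num : (-1 : ℝ) ≤ 0)]
        exact Set.Icc_subset_Icc le_rfl hy2
      have hsubx1 : ∀ y : ℝ, -1 ≤ y → y ≤ 1 → Set.uIcc (-1 : ℝ) y ⊆ Set.uIcc (-1 : ℝ) 1 := by
        intro y hy1 hy2
        rw [Set.uIcc_of_le hy1, Set.uIcc_of_le (by norm_num : (-1 : ℝ) ≤ 1)]
        exact Set.Icc_subset_Icc le_rfl hy2
      have Ih : ∫ t in (-1 : ℝ)..x, h' t = h₀ x - h₀ (-1) := by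
        have := hACh.2 x hx
        rw [this]; ring
      by_cases hx0 : x ≤ 0
      · have hii_kx : IntervalIntegrable (fun t => k' t + g' t) volume (-1) x :=
          hii_k.mono_set (hsubx x hx.1 hx0)
        have hindx : IntervalIntegrable (Set.indicator (Set.Iic (0 : ℝ))
            fun t => k' t + g' t) volume (-1) x := by
          rw [intervalIntegrable_iff_integrableOn_Ioc_of_le hx.1]
          refine ((intervalIntegrable_iff_integrableOn_Ioc_of_le hx.1).mp
            hii_kx).congr_fun ?_ measurableSet_Ioc
          intro t ht
          exact (Set.indicator_of_mem (Set.mem_Iic.mpr (le_trans ht.2 hx0)) (fun t => k' t + g' t)).symm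
        rw [Set.indicator_of_mem (Set.mem_Iic.mpr hx0), hΦa,
          intervalIntegral.integral_add (hACh.1.mono_set (hsubx1 x hx.1 hx.2)) hindx]
        have hie : ∫ t in (-1 : ℝ)..x, Set.indicator (Set.Iic (0 : ℝ))
            (fun t => k' t + g' t) t = ∫ t in (-1 : ℝ)..x, (k' t + g' t) := by
          refine intervalIntegral.integral_congr fun t ht => ?_
          rw [Set.uIcc_of_le hx.1] at ht
          exact Set.indicator_of_mem (Set.mem_Iic.mpr (le_trans ht.2 hx0)) _
        rw [hie, intervalIntegral.integral_add (hACk.1.mono_set (hsubx x hx.1 hx0))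
          (hACg.1.mono_set (hsubx1 x hx.1 hx.2)), Ih]
        have Ik : ∫ t in (-1 : ℝ)..x, k' t = k₀ x - k₀ (-1) := by
          have := hACk.2 x ⟨hx.1, hx0⟩
          rw [this]; ring
        have Ig : ∫ t in (-1 : ℝ)..x, g' t = g₀ x - g₀ (-1) := by
          have := hACg.2 x hx
          rw [this]; ring
        rw [Ik, Ig]
        ring
      · have hxpos : 0 < x := lt_of_not_ge hx0
        have hind2x : IntervalIntegrable (Set.indicator (Set.Iic (0 : ℝ))
            fun t => k' t + g' t) volume 0 x := by
          rw [intervalIntegrable_iff_integrableOn_Ioc_of_le hxpos.le]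
          refine (integrableOn_zero :
            IntegrableOn (fun _ : ℝ => (0 : ℂ)) (Set.Ioc (0 : ℝ) x) volume).congr_fun ?_
            measurableSet_Ioc
          intro t ht
          exact (Set.indicator_of_notMem (fun h => absurd (Set.mem_Iic.mp h)
            (not_le.mpr ht.1)) (fun t => k' t + g' t)).symm
        have hind1x : IntervalIntegrable (Set.indicator (Set.Iic (0 : ℝ))
            fun t => k' t + g' t) volume (-1) 0 := by
          rw [intervalIntegrable_iff_integrableOn_Ioc_of_le (by norm_num : (-1 : ℝ) ≤ 0)]
          refine ((intervalIntegrable_iff_integrableOn_Ioc_of_le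
            (by norm_num : (-1 : ℝ) ≤ 0)).mp hii_k).congr_fun ?_ measurableSet_Ioc
          intro t ht
          exact (Set.indicator_of_mem (Set.mem_Iic.mpr ht.2) (fun t => k' t + g' t)).symm
        rw [Set.indicator_of_notMem (fun h => hx0 (Set.mem_Iic.mp h)), hΦa,
          intervalIntegral.integral_add (hACh.1.mono_set (hsubx1 x hx.1 hx.2))
            (hind1x.trans hind2x)]
        have hsplitI : ∫ t in (-1 : ℝ)..x, Set.indicator (Set.Iic (0 : ℝ))
            (fun t => k' t + g' t) t
            = (∫ t in (-1 : ℝ)..(0 : ℝ), Set.indicator (Set.Iic (0 : ℝ))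
              (fun t => k' t + g' t) t)
              + ∫ t in (0 : ℝ)..x, Set.indicator (Set.Iic (0 : ℝ))
              (fun t => k' t + g' t) t :=
          (intervalIntegral.integral_add_adjacent_intervals hind1x hind2x).symm
        have hI0 : ∫ t in (-1 : ℝ)..(0 : ℝ), Set.indicator (Set.Iic (0 : ℝ))
            (fun t => k' t + g' t) t = (k₀ 0 - k₀ (-1)) + (g₀ 0 - g₀ (-1)) := by
          have hie : ∫ t in (-1 : ℝ)..(0 : ℝ), Set.indicator (Set.Iic (0 : ℝ))
              (fun t => k' t + g' t) t = ∫ t in (-1 : ℝ)..(0 : ℝ), (k' t + g' t) := by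
            refine intervalIntegral.integral_congr fun t ht => ?_
            rw [Set.uIcc_of_le (by norm_num : (-1 : ℝ) ≤ 0)] at ht
            exact Set.indicator_of_mem (Set.mem_Iic.mpr ht.2) _
          rw [hie, intervalIntegral.integral_add hACk.1 (hACg.1.mono_set hsub10)]
          have Ik : ∫ t in (-1 : ℝ)..(0 : ℝ), k' t = k₀ 0 - k₀ (-1) := by
            have := hACk.2 0 ⟨by norm_num, le_refl 0⟩
            rw [this]; ring
          have Ig : ∫ t in (-1 : ℝ)..(0 : ℝ), g' t = g₀ 0 - g₀ (-1) := by
            have := hACg.2 0 ⟨by norm_num, by norm_num⟩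
            rw [this]; ring
          rw [Ik, Ig]
        have hIx : ∫ t in (0 : ℝ)..x, Set.indicator (Set.Iic (0 : ℝ))
            (fun t => k' t + g' t) t = 0 := by
          rw [intervalIntegral.integral_of_le hxpos.le,
            setIntegral_congr_fun measurableSet_Ioc (fun t ht =>
              Set.indicator_of_notMem (fun h => absurd (Set.mem_Iic.mp h)
                (not_le.mpr ht.1)) _)]
          simp
        rw [hsplitI, hI0, hIx, Ih]
        linear_combination (-1 : ℂ) * hkg0
    · -- integrability of p * |Φ'|^2
      have hmem_eq : volume.restrict (Set.Icc (-1 : ℝ) 1)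
          = volume.restrict (Set.Ioc (-1 : ℝ) 1) :=
        Measure.restrict_congr_set Ioc_ae_eq_Icc.symm
      have hmem_eq0 : volume.restrict (Set.Icc (-1 : ℝ) 0)
          = volume.restrict (Set.Ioc (-1 : ℝ) 0) :=
        Measure.restrict_congr_set Ioc_ae_eq_Icc.symm
      have haesm_h' : AEStronglyMeasurable h' (volume.restrict (Set.Icc (-1 : ℝ) 1)) := by
        rw [hmem_eq]; exact hACh.1.1.1
      have haesm_kg : AEStronglyMeasurable (fun t => k' t + g' t)
          (volume.restrict (Set.Icc (-1 : ℝ) 0)) := by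
        rw [hmem_eq0]
        exact hACk.1.1.1.add (hACg.1.1.1.mono_measure
          (Measure.restrict_mono (Set.Ioc_subset_Ioc le_rfl (by norm_num)) le_rfl))
      have haesm_ind : AEStronglyMeasurable (Set.indicator (Set.Iic (0 : ℝ))
          fun t => k' t + g' t) (volume.restrict (Set.Icc (-1 : ℝ) 1)) := by
        rw [aestronglyMeasurable_indicator_iff measurableSet_Iic,
          Measure.restrict_restrict measurableSet_Iic, hseteq0]
        exact haesm_kg
      have haesm_p : AEStronglyMeasurable p (volume.restrict (Set.Icc (-1 : ℝ) 1)) := by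
        have h1 := hc.1.1.aemeasurable.inv
        have hfe : (fun x => 1 / p x)⁻¹ = p := by funext x; rw [Pi.inv_apply, one_div, inv_inv]
        rw [hfe] at h1
        exact h1.aestronglyMeasurable
      have haesm_Φ' : AEStronglyMeasurable (fun x => h' x + Set.indicator (Set.Iic (0 : ℝ))
          (fun t => k' t + g' t) x) (volume.restrict (Set.Icc (-1 : ℝ) 1)) :=
        haesm_h'.add haesm_ind
      have haesm_goal : AEStronglyMeasurable (fun x => p x * ‖h' x + Set.indicator
          (Set.Iic (0 : ℝ)) (fun t => k' t + g' t) x‖ ^ 2)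
          (volume.restrict (Set.Icc (-1 : ℝ) 1)) := by
        refine haesm_p.mul ?_
        refine (haesm_Φ'.norm.mul haesm_Φ'.norm).congr ?_
        exact Filter.Eventually.of_forall fun x => (pow_two _).symm
      have hDind : IntegrableOn (Set.indicator (Set.Iic (0 : ℝ))
          (fun t => 3 * (p t * ‖k' t‖ ^ 2) + 3 * (p t * ‖g' t‖ ^ 2)))
          (Set.Icc (-1 : ℝ) 1) := by
        rw [IntegrableOn, integrable_indicator_iff measurableSet_Iic, IntegrableOn,
          Measure.restrict_restrict measurableSet_Iic, hseteq0]
        exact (hint_k.const_mul 3).add ((hint_g.mono_set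
          (Set.Icc_subset_Icc le_rfl (by norm_num))).const_mul 3)
      refine Integrable.mono' ((hint_h.const_mul 3).add hDind) haesm_goal ?_
      have hppos : ∀ᵐ x ∂(volume.restrict (Set.Icc (-1 : ℝ) 1)), 0 < p x :=
        hvol.mono fun x hx => hx.2.1
      filter_upwards [hppos] with x hpx
      rw [Pi.add_apply]
      have hnn : (0 : ℝ) ≤ p x * ‖h' x + Set.indicator (Set.Iic (0 : ℝ))
          (fun t => k' t + g' t) x‖ ^ 2 := by positivity
      rw [Real.norm_eq_abs, abs_of_nonneg hnn]
      by_cases hx0 : x ∈ Set.Iic (0 : ℝ)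
      · rw [Set.indicator_of_mem hx0, Set.indicator_of_mem hx0]
        have t1 := norm_add_le (h' x) (k' x + g' x)
        have t2 := norm_add_le (k' x) (g' x)
        have n1 := norm_nonneg (h' x)
        have n2 := norm_nonneg (k' x)
        have n3 := norm_nonneg (g' x)
        have n4 := norm_nonneg (h' x + (k' x + g' x))
        have hs : ‖h' x + (k' x + g' x)‖ ^ 2
            ≤ 3 * (‖h' x‖ ^ 2 + ‖k' x‖ ^ 2 + ‖g' x‖ ^ 2) := by
          nlinarith [t1, t2, n1, n2, n3, n4, sq_nonneg (‖h' x‖ - ‖k' x‖),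
            sq_nonneg (‖h' x‖ - ‖g' x‖), sq_nonneg (‖k' x‖ - ‖g' x‖)]
        nlinarith [mul_le_mul_of_nonneg_left hs hpx.le]
      · rw [Set.indicator_of_notMem hx0, Set.indicator_of_notMem hx0, add_zero, add_zero]
        nlinarith [mul_nonneg hpx.le (sq_nonneg ‖h' x‖)]

  · -- boundary values
    intro f g g' hfg hACg hintg G G' hWG hACG
    obtain ⟨⟨-, k₀, k', hWk, hACk, hint_k⟩, -⟩ :=
      hW1F f ⟨Lp.memLp f, g, g', hfg, hACg, hintg⟩
    have hbd : k₀ (-1) = g (-1) := hW1bd f g g' hfg hACg hintg k₀ k' hWk hACk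
    have hcG : ContinuousOn G (Set.Icc (-1 : ℝ) 1) := ACOn_continuousOn hACG (by norm_num)
    have hcg : ContinuousOn g (Set.Icc (-1 : ℝ) 1) := ACOn_continuousOn hACg (by norm_num)
    have hck : ContinuousOn k₀ (Set.Icc (-1 : ℝ) 0) := ACOn_continuousOn hACk (by norm_num)
    have hk1 := hsubIic _ _ hWk
    constructor
    · have hae : ∀ᵐ x ∂(wM r (Set.Icc (-1 : ℝ) 1)), x ∈ Set.Icc (-1 : ℝ) (-(1 / 2)) →
          G x = k₀ x := by
        filter_upwards [hE f, hW0c f, hWG, hk1] with x e0 e1 e2 e3 hx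
        have habs : (1 : ℝ) / 2 ≤ |x| := by rw [le_abs]; right; linarith [hx.2]
        have hx0 : x ∈ Set.Iic (0 : ℝ) := Set.mem_Iic.mpr (by linarith [hx.2])
        rw [← e2, e0, e1 habs, e3 hx0]
        ring
      have hae2 := hdown (-1) (-(1 / 2)) (fun x hx => ⟨hx.1, by linarith [hx.2]⟩) _ _ hae
      have heq := MeasureTheory.Measure.eqOn_Icc_of_ae_eq volume
        (by norm_num : (-1 : ℝ) ≠ -(1 / 2)) hae2
        (hcG.mono fun x hx => ⟨hx.1, by linarith [hx.2]⟩)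
        (hck.mono fun x hx => ⟨hx.1, by linarith [hx.2]⟩)
      have hG1 : G (-1) = k₀ (-1) := heq ⟨le_refl _, by norm_num⟩
      rw [hG1, hbd]
    · have hae : ∀ᵐ x ∂(wM r (Set.Icc (-1 : ℝ) 1)), x ∈ Set.Icc ((1 : ℝ) / 2) 1 →
          G x = g x := by
        filter_upwards [hE f, hW0c f, hWG, hW1c f, hfg, hμfacts] with x e0 e1 e2 e4 e3 e5 hx
        have habs : (1 : ℝ) / 2 ≤ |x| := by rw [le_abs]; left; exact hx.1
        have hxpos : 0 < x := by linarith [hx.1]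
        rw [← e2, e0, e1 habs, e4 (by linarith [hx.1]), e3, e5.1.2.2.2.1 hxpos]
        push_cast
        ring
      have hae2 := hdown (1 / 2) 1 (fun x hx => ⟨by linarith [hx.1], hx.2⟩) _ _ hae
      have heq := MeasureTheory.Measure.eqOn_Icc_of_ae_eq volume
        (by norm_num : (1 : ℝ) / 2 ≠ 1) hae2
        (hcG.mono fun x hx => ⟨by linarith [hx.1], hx.2⟩)
        (hcg.mono fun x hx => ⟨by linarith [hx.1], hx.2⟩)
      exact heq ⟨by norm_num, le_refl _⟩


end SL
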